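/- arXiv:1208.4219 — 3 statements merged into one kernel-verified Lean document; each statement's English description precedes it below -/
import Mathlib

section
/- (Iterative Lemma, error-field estimate.) In addition to the hypotheses guaranteeing the solution ζ of 0 = ρ(w) + A(w)z + R(w,z) with ‖ζ(w)‖ ≤ K‖ρ(w)‖ on V+iν, suppose W : (V+iν)×(S+iσ) → 𝒲_ℂ is analytic with ‖W‖_{ν,σ} ≤ 1, and let ξ satisfy ξ ≥ 2Kδ, ν − ξ > 0, 0 < κ ≤ σ − ξ, with δ := ‖ρ‖_ν ≤ ½ κ² K^{-2} C_R^{-1}. Define ρ₊(w) := −ε ∂_w ζ(w) W(w, ζ(w)). Then for every w ∈ V+i(ν−ξ): ‖ρ₊(w)‖ ≤ (εK/ξ) δ ‖W(w,ζ(w))‖; in particular δ₊ := ‖ρ₊‖_{ν−ξ} ≤ (εK/ξ) δ. -/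
open Metric


lemma fderiv_norm_le_of_ball {E F : Type*} [NormedAddCommGroup E] [NormedSpace ℂ E]
    [NormedAddCommGroup F] [NormedSpace ℂ F] [CompleteSpace F]
    {f : E → F} {s : Set E} (hs : IsOpen s) (hf : DifferentiableOn ℂ f s)
    {w : E} {r M : ℝ} (hr : 0 < r) (hM : 0 ≤ M)
    (hball : closedBall w r ⊆ s) (hbdd : ∀ x ∈ closedBall w r, ‖f x‖ ≤ M)
    (u : E) : ‖fderiv ℂ f w u‖ ≤ M / r * ‖u‖ := by
  by_cases hu0 : u = 0
  · simp [hu0]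
  have hun : 0 < ‖u‖ := norm_pos_iff.2 hu0
  set Rr : ℝ := r / ‖u‖ with hRr
  have hRr0 : 0 < Rr := div_pos hr hun
  set g : ℂ → F := fun t => f (w + t • u) with hg
  have hmaps : ∀ t : ℂ, t ∈ closedBall (0:ℂ) Rr → w + t • u ∈ closedBall w r := by
    intro t ht
    simp only [mem_closedBall, dist_self_add_left] at ht ⊢
    calc ‖t • u‖ = ‖t‖ * ‖u‖ := norm_smul t u
      _ ≤ Rr * ‖u‖ := by
          have : ‖t‖ ≤ Rr := by simpa [Complex.dist_eq] using ht
          exact mul_le_mul_of_nonneg_right this hun.le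
      _ = r := div_mul_cancel₀ r hun.ne'
  have hgd : DifferentiableOn ℂ g (closedBall (0:ℂ) Rr) := by
    intro t ht
    have hx : w + t • u ∈ s := hball (hmaps t ht)
    have hfA : DifferentiableAt ℂ f (w + t • u) :=
      hf.differentiableAt (hs.mem_nhds hx)
    have hlin : DifferentiableAt ℂ (fun t : ℂ => w + t • u) t := by
      exact (differentiableAt_id.smul_const u).const_add w
    exact (hfA.comp t hlin).differentiableWithinAt
  have hdcc : DiffContOnCl ℂ g (ball (0:ℂ) Rr) := by
    refine ⟨hgd.mono ball_subset_closedBall, ?_⟩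
    rw [closure_ball (0:ℂ) hRr0.ne']
    exact hgd.continuousOn
  have hC : ∀ z ∈ sphere (0:ℂ) Rr, ‖g z‖ ≤ M := by
    intro z hz
    exact hbdd _ (hmaps z (sphere_subset_closedBall hz))
  have hkey := Complex.norm_deriv_le_of_forall_mem_sphere_norm_le hRr0 hdcc hC
  have hderiv : deriv g 0 = fderiv ℂ f w u := by
    have h1 : HasDerivAt (fun t : ℂ => w + t • u) u 0 := by
      simpa using ((hasDerivAt_id (0:ℂ)).smul_const u).const_add w
    have hx : w ∈ s := hball (mem_closedBall_self hr.le)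
    have h2 : HasFDerivAt f (fderiv ℂ f w) (w + (0:ℂ) • u) := by
      simpa using (hf.differentiableAt (hs.mem_nhds hx)).hasFDerivAt
    have h3 : HasDerivAt g (fderiv ℂ f w u) 0 := h2.comp_hasDerivAt 0 h1
    exact h3.deriv
  rw [hderiv] at hkey
  calc ‖fderiv ℂ f w u‖ ≤ M / Rr := hkey
    _ = M / r * ‖u‖ := by
        rw [hRr]; field_simp


/-- **Iterative Lemma, error-field estimate.**
With `ζ` the analytic solution of `0 = ρ(w) + A(w)z + R(w,z)` satisfying
`‖ζ(w)‖ ≤ K‖ρ(w)‖`, `‖W‖_{ν,σ} ≤ 1`, `ξ ≥ 2Kδ`, `ν − ξ > 0`, `0 < κ ≤ σ − ξ`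
and `δ ≤ ½κ²K⁻²C_R⁻¹`, the new error field
`ρ₊(w) = −ε ∂_w ζ(w) W(w,ζ(w))` satisfies
`‖ρ₊(w)‖ ≤ (εK/ξ) δ ‖W(w,ζ(w))‖ ≤ (εK/ξ) δ` on `V+i(ν−ξ)`. -/
theorem iterative_lemma_error_field
    {𝒲 𝒵 : Type*} [NormedAddCommGroup 𝒲] [NormedSpace ℂ 𝒲]
    [NormedAddCommGroup 𝒵] [NormedSpace ℂ 𝒵] [CompleteSpace 𝒵]
    (V : Set 𝒲) (S : Set 𝒵) (hS0 : (0 : 𝒵) ∈ S)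
    (ν σ K C_R κ δ ξ ε : ℝ)
    (hν : 0 < ν) (hσ : 0 < σ) (hK : 0 < K) (hCR : 0 < C_R) (hε : 0 < ε)
    (A Ainv : 𝒲 → 𝒵 →L[ℂ] 𝒵)
    (hA_inv : ∀ w ∈ thickening ν V,
      (A w).comp (Ainv w) = ContinuousLinearMap.id ℂ 𝒵 ∧
      (Ainv w).comp (A w) = ContinuousLinearMap.id ℂ 𝒵)
    (hAinv_an : DifferentiableOn ℂ Ainv (thickening ν V))
    (hAinv_bdd : ∀ w ∈ thickening ν V, ‖Ainv w‖ ≤ K / 2)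
    (ρ : 𝒲 → 𝒵) (hρ_an : DifferentiableOn ℂ ρ (thickening ν V))
    (hρ_bdd : ∀ w ∈ thickening ν V, ‖ρ w‖ ≤ δ)
    (R : 𝒲 → 𝒵 → 𝒵)
    (hR_an : DifferentiableOn ℂ (fun p : 𝒲 × 𝒵 => R p.1 p.2)
      (thickening ν V ×ˢ thickening σ S))
    (hR0 : ∀ w ∈ thickening ν V, R w 0 = 0)
    (hdR0 : ∀ w ∈ thickening ν V, fderiv ℂ (R w) 0 = 0)
    (hR_bdd : ∀ w ∈ thickening ν V, ∀ z ∈ thickening σ S, ‖R w z‖ ≤ C_R)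
    (ζ : 𝒲 → 𝒵) (hζ_an : DifferentiableOn ℂ ζ (thickening ν V))
    (hζ_sol : ∀ w ∈ thickening ν V, ρ w + A w (ζ w) + R w (ζ w) = 0)
    (hζ_bdd : ∀ w ∈ thickening ν V, ‖ζ w‖ ≤ K * ‖ρ w‖)
    (Wf : 𝒲 → 𝒵 → 𝒲)
    (hW_an : DifferentiableOn ℂ (fun p : 𝒲 × 𝒵 => Wf p.1 p.2)
      (thickening ν V ×ˢ thickening σ S))
    (hW_bdd : ∀ w ∈ thickening ν V, ∀ z ∈ thickening σ S, ‖Wf w z‖ ≤ 1)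
    (hξ : 0 < ξ) (hξδ : 2 * K * δ ≤ ξ) (hνξ : 0 < ν - ξ)
    (hκ : 0 < κ) (hκσ : κ ≤ σ - ξ)
    (hδ : δ ≤ κ ^ 2 / (2 * K ^ 2 * C_R)) :
    ∀ w ∈ thickening (ν - ξ) V,
      ‖-((ε : ℂ) • (fderiv ℂ ζ w) (Wf w (ζ w)))‖
          ≤ ε * K / ξ * δ * ‖Wf w (ζ w)‖ ∧
      ‖-((ε : ℂ) • (fderiv ℂ ζ w) (Wf w (ζ w)))‖ ≤ ε * K / ξ * δ := by
  intro w hw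
  have hwv : w ∈ thickening ν V := by
    refine thickening_mono ?_ V hw
    linarith
  have hδ0 : 0 ≤ δ := (norm_nonneg _).trans (hρ_bdd w hwv)
  have hζmem : ζ w ∈ thickening σ S := by
    rw [Metric.mem_thickening_iff]
    refine ⟨0, hS0, ?_⟩
    rw [dist_zero_right]
    calc ‖ζ w‖ ≤ K * ‖ρ w‖ := hζ_bdd w hwv
      _ ≤ K * δ := by nlinarith [hρ_bdd w hwv]
      _ < σ := by nlinarith
  set u : 𝒲 := Wf w (ζ w) with hu
  have hu1 : ‖u‖ ≤ 1 := hW_bdd w hwv (ζ w) hζmem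
  obtain ⟨v, hvV, hdwv⟩ := Metric.mem_thickening_iff.1 hw
  have hball : closedBall w ξ ⊆ thickening ν V := by
    intro x hx
    rw [Metric.mem_thickening_iff]
    refine ⟨v, hvV, ?_⟩
    calc dist x v ≤ dist x w + dist w v := dist_triangle x w v
      _ < ξ + (ν - ξ) := by
          have := mem_closedBall.1 hx
          linarith
      _ = ν := by ring
  have hbdd : ∀ x ∈ closedBall w ξ, ‖ζ x‖ ≤ K * δ := by
    intro x hx
    calc ‖ζ x‖ ≤ K * ‖ρ x‖ := hζ_bdd x (hball hx)
      _ ≤ K * δ := by nlinarith [hρ_bdd x (hball hx), norm_nonneg (ρ x)]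
  have hkey : ‖(fderiv ℂ ζ w) u‖ ≤ K * δ / ξ * ‖u‖ :=
    fderiv_norm_le_of_ball isOpen_thickening hζ_an hξ (by positivity) hball hbdd u
  have hεKξδ : 0 ≤ ε * K / ξ * δ := by positivity
  have hnorm : ‖-((ε : ℂ) • (fderiv ℂ ζ w) (Wf w (ζ w)))‖
      = ε * ‖(fderiv ℂ ζ w) u‖ := by
    rw [norm_neg, norm_smul, Complex.norm_real, Real.norm_of_nonneg hε.le, hu]
  constructor
  · rw [hnorm]
    calc ε * ‖(fderiv ℂ ζ w) u‖ ≤ ε * (K * δ / ξ * ‖u‖) :=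
          mul_le_mul_of_nonneg_left hkey hε.le
      _ = ε * K / ξ * δ * ‖u‖ := by ring
  · rw [hnorm]
    calc ε * ‖(fderiv ℂ ζ w) u‖ ≤ ε * (K * δ / ξ * ‖u‖) :=
          mul_le_mul_of_nonneg_left hkey hε.le
      _ = ε * K / ξ * δ * ‖u‖ := by ring
      _ ≤ ε * K / ξ * δ * 1 := mul_le_mul_of_nonneg_left hu1 hεKξδ
      _ = ε * K / ξ * δ := mul_one _
end

section
/- (Equilibria are preserved by the iteration step.) In the setting of the Hamiltonian iterative step, let ζ : V+iν → ℂ^{2d_𝒵} be the analytic solution of ∂_z H(w,ζ(w)) = 0, and let Ψ₊ : (w₊,z₊) ↦ (w,z) be the symplectic transformation defined implicitly by x₊ = x − ζ^x(u,v₊), y = y₊ + ζ^y(u,v₊), u₊ = u + ε∂_{v₊}g(u,v₊,x,y₊), v = v₊ + ε∂_u g(u,v₊,x,y₊), where g(u,v₊,x,y₊) = −⟨ζ^x(u,v₊), y₊⟩ + ⟨ζ^y(u,v₊), x⟩. Suppose w^e = (u^e,v^e) is such that ζ(w^e) = 0 (which holds whenever (w^e,0) is an equilibrium, since then ρ(w^e)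 = ∂_z H(w^e,0) = 0). Then the pair (w₊,z₊) = (w^e,0), (w,z) = (w^e,0) satisfies all four implicit equations; consequently, by local uniqueness of the transformation, Ψ₊(w^e,0) = (w^e,0), i.e. the equilibrium is contained in the improved slow manifold {z₊ = 0} and has the same coordinates (w^e,0) in the new variables. -/
open Metric

noncomputable section

/-- The pairing `⟨a,b⟩ = a₁b₁ + … + a_n b_n` on `ℂⁿ`. -/
def cdot {n : ℕ} (a b : Fin n → ℂ) : ℂ := ∑ i, a i * b i

/-- The complexified slow (or fast) phase space of `d` degrees of freedom:
pairs `(u,v)` (resp. `(x,y)`) of vectors in `ℂᵈ`. -/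
abbrev PhC (d : ℕ) := (Fin d → ℂ) × (Fin d → ℂ)

/-- **Equilibria are preserved by the Hamiltonian iteration step.**
If `ζ(wᵉ) = 0`, then `(w₊,z₊) = (wᵉ,0)`, `(w,z) = (wᵉ,0)` satisfies the four
implicit equations `x₊ = x − ζˣ(u,v₊)`, `y = y₊ + ζʸ(u,v₊)`,
`u₊ = u + ε∂_{v₊}g`, `v = v₊ + ε∂_u g` defining the symplectic transformation
`Ψ₊`; consequently, by local uniqueness, `Ψ₊(wᵉ,0) = (wᵉ,0)`. -/
theorem equilibrium_preserved_by_iteration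
    {dW dZ : ℕ} (ν : ℝ) (V : Set (PhC dW))
    (ζ : PhC dW → PhC dZ)
    (hζ_an : DifferentiableOn ℂ ζ (thickening ν V))
    (g : (Fin dW → ℂ) → (Fin dW → ℂ) → (Fin dZ → ℂ) → (Fin dZ → ℂ) → ℂ)
    (hg : ∀ u v x y, g u v x y = -cdot (ζ (u, v)).1 y + cdot (ζ (u, v)).2 x)
    (we : PhC dW) (hζe : ζ we = 0) (ε : ℝ)
    -- the four implicit equations, for source point `(w₊,z₊) = (wᵉ,0)` and
    -- target point `(w,z)`
    (Eqs : PhC dW → PhC dZ → Prop)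
    (hEqs : ∀ w z, Eqs w z ↔
      ((0 : Fin dZ → ℂ) = z.1 - (ζ (w.1, we.2)).1 ∧
       z.2 = (0 : Fin dZ → ℂ) + (ζ (w.1, we.2)).2 ∧
       (∀ i, we.1 i = w.1 i +
         (ε : ℂ) * fderiv ℂ (fun v' => g w.1 v' z.1 0) we.2 (Pi.single i 1)) ∧
       (∀ i, w.2 i = we.2 i +
         (ε : ℂ) * fderiv ℂ (fun u' => g u' we.2 z.1 0) w.1 (Pi.single i 1))))
    (Ψplus : PhC dW × PhC dZ → PhC dW × PhC dZ)
    -- local uniqueness of the implicitly defined transformation at `(wᵉ,0)`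
    (huniq : ∀ w z, Eqs w z → (w, z) = Ψplus (we, 0)) :
    Eqs we 0 ∧ Ψplus (we, 0) = (we, (0 : PhC dZ)) := by
  have hE : Eqs we 0 := by
    rw [hEqs]
    have h1 : (fun v' => g we.1 v' (0 : PhC dZ).1 0) = fun _ => (0 : ℂ) := by
      funext v'; simp [hg, cdot]
    have h2 : (fun u' => g u' we.2 (0 : PhC dZ).1 0) = fun _ => (0 : ℂ) := by
      funext u'; simp [hg, cdot]
    refine ⟨?_, ?_, ?_, ?_⟩
    · simp [hζe]
    · simp [hζe]
    · intro i; rw [h1]; simp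
    · intro i; rw [h2]; simp
  exact ⟨hE, (huniq we 0 hE).symm⟩
end
end

section
/- (Counterexample to MacKay's pointwise conjecture: explicit second iteration.) Let f : ℝ → ℝ be continuously differentiable and ε ∈ ℝ. Suppose (w,z) : I → ℝ² solves ∂_t w = ε f(w), ∂_t z = ε w − z on an interval I. Define z₂(t) := z(t) − ε w(t) + ε² f(w(t)). Then z₂ solves ∂_t z₂ = ε³ f′(w) f(w) − z₂ on I. In particular, after two steps of the slow-manifold improvement iteration the error field equals ρ₂(w) = ε³ f′(w) f(w), which cannot be bounded from above by an expression containing |f(w)|² as a factor when f has a simple zero. -/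
/-- **Counterexample to MacKay's pointwise conjecture: explicit second iteration.**
For the planar slow-fast system `∂_t w = ε f(w)`, `∂_t z = ε w − z`,
the second improvement step `z₂ := z − εw + ε²f(w)` solves
`∂_t z₂ = ε³ f′(w) f(w) − z₂`, i.e. the error field after two steps is
`ρ₂(w) = ε³ f′(w) f(w)`. -/
theorem mackay_counterexample_second_iteration
    {f : ℝ → ℝ} (hf : ContDiff ℝ 1 f) (ε : ℝ)
    {I : Set ℝ} {w z : ℝ → ℝ}
    (hw : ∀ t ∈ I, HasDerivAt w (ε * f (w t)) t)
    (hz : ∀ t ∈ I, HasDerivAt z (ε * w t - z t) t) :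
    ∀ t ∈ I,
      HasDerivAt (fun s => z s - ε * w s + ε ^ 2 * f (w s))
        (ε ^ 3 * deriv f (w t) * f (w t)
          - (z t - ε * w t + ε ^ 2 * f (w t))) t := by
  intro t ht
  have hfd : HasDerivAt f (deriv f (w t)) (w t) :=
    (hf.differentiable one_ne_zero (w t)).hasDerivAt
  have h1 : HasDerivAt (fun s => f (w s)) (deriv f (w t) * (ε * f (w t))) t :=
    hfd.comp t (hw t ht)
  have h := ((hz t ht).sub ((hw t ht).const_mul ε)).add (h1.const_mul (ε ^ 2))
  refine HasDerivAt.congr_deriv h ?_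
  ring
end
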